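/- Let d ≥ 1 and let h : ℝ^d → ℝ be defined as in the context. Then: (1) h(0) − inf_{x∈ℝ^d} h(x) ≤ 12d; (2) h has 152-Lipschitz gradient, i.e., ‖∇h(x) − ∇h(y)‖ ≤ 152‖x − y‖ for all x, y ∈ ℝ^d; (3) ‖∇h(x)‖_∞ ≤ 23 for all x ∈ ℝ^d; and (4) ‖∇h(x)‖_∞ ≥ 1 for every x ∈ ℝ^d with x_d = 0. -/

import Mathlib

set_option autoImplicit false
set_option maxHeartbeats 1000000

open MeasureTheory

noncomputable section

/-- The bump `ψ` from Arjevani et al. -/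
def ψfun (z : ℝ) : ℝ := if z ≤ 1 / 2 then 0 else Real.exp (1 - 1 / (2 * z - 1) ^ 2)

/-- The soft step `φ(z) = √e ∫_{-∞}^z e^{-t²/2} dt`. -/
def φfun (z : ℝ) : ℝ := Real.sqrt (Real.exp 1) * ∫ t in Set.Iic z, Real.exp (-t ^ 2 / 2)

/-- The hard zero-chain function `h` on `ℝ^{d+1}` (coordinates are 0-based: the paper's
`x_j` is `x ⟨j-1⟩`). -/
def hardFun {d : ℕ} (x : EuclideanSpace ℝ (Fin (d + 1))) : ℝ :=
  -(ψfun 1) * φfun (x 0) +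
    ∑ j : Fin d,
      (ψfun (-(x j.castSucc)) * φfun (-(x j.succ)) - ψfun (x j.castSucc) * φfun (x j.succ))

/-- `h₁`: the part of `h` with pairs `(x_j, x_{j+1})` for (1-based) even `j`,
doubled, together with the doubled first term. -/
def hardFun1 {d : ℕ} (x : EuclideanSpace ℝ (Fin (d + 1))) : ℝ :=
  -2 * ψfun 1 * φfun (x 0) +
    2 * ∑ j : Fin d, if Even ((j : ℕ) + 1) then
      ψfun (-(x j.castSucc)) * φfun (-(x j.succ)) - ψfun (x j.castSucc) * φfun (x j.succ)
    else 0

/-- `h₂`: the doubled part of `h` with pairs `(x_j, x_{j+1})` for (1-based) odd `j`. -/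
def hardFun2 {d : ℕ} (x : EuclideanSpace ℝ (Fin (d + 1))) : ℝ :=
  2 * ∑ j : Fin d, if Odd ((j : ℕ) + 1) then
      ψfun (-(x j.castSucc)) * φfun (-(x j.succ)) - ψfun (x j.castSucc) * φfun (x j.succ)
    else 0

/-- `prog x`: `0` if `x = 0`, otherwise the largest (1-based) index of a nonzero
coordinate of `x`. -/
def progVec {m : ℕ} (x : EuclideanSpace ℝ (Fin m)) : ℕ :=
  sSup {k | ∃ j : Fin m, x j ≠ 0 ∧ k = (j : ℕ) + 1}


/-! ### auxiliary derivative functions -/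

def ψd (z : ℝ) : ℝ := if z ≤ 1 / 2 then 0 else Real.exp (1 - 1 / (2 * z - 1) ^ 2) * (4 / (2 * z - 1) ^ 3)

def ψdd (z : ℝ) : ℝ := if z ≤ 1 / 2 then 0 else
  Real.exp (1 - 1 / (2 * z - 1) ^ 2) * (16 / (2 * z - 1) ^ 6 - 24 / (2 * z - 1) ^ 4)

def φd (z : ℝ) : ℝ := Real.exp ((1 - z ^ 2) / 2)

def φdd (z : ℝ) : ℝ := -z * Real.exp ((1 - z ^ 2) / 2)

/-! ### numeric facts -/

lemma exp_ge_T5 {x : ℝ} (hx : 0 ≤ x) :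
    1 + x + x^2/2 + x^3/6 + x^4/24 + x^5/120 ≤ Real.exp x := by
  have := Real.sum_le_exp_of_nonneg hx 6
  norm_num [Finset.sum_range_succ, Nat.factorial] at this
  linarith

lemma exp_ge_T6 {x : ℝ} (hx : 0 ≤ x) :
    1 + x + x^2/2 + x^3/6 + x^4/24 + x^5/120 + x^6/720 ≤ Real.exp x := by
  have := Real.sum_le_exp_of_nonneg hx 7
  norm_num [Finset.sum_range_succ, Nat.factorial] at this
  linarith

lemma exp_ge_cube {x : ℝ} (hx : 0 ≤ x) : x^3/6 ≤ Real.exp x := by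
  have := Real.pow_div_factorial_le_exp x hx 3
  norm_num [Nat.factorial] at this; linarith

lemma exp_ge_pow7 {x : ℝ} (hx : 0 ≤ x) : x^7/5040 ≤ Real.exp x := by
  have := Real.pow_div_factorial_le_exp x hx 7
  norm_num [Nat.factorial] at this; linarith

lemma exp_one_lb : (2.7182818 : ℝ) ≤ Real.exp 1 := by linarith [Real.exp_one_gt_d9]
lemma exp_one_ub : Real.exp 1 ≤ (2.7182819 : ℝ) := by linarith [Real.exp_one_lt_d9]

lemma exp_half_sq : Real.exp (1/2 : ℝ) * Real.exp (1/2 : ℝ) = Real.exp 1 := by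
  rw [← Real.exp_add]; norm_num

lemma exp_half_lb : (1.6487212 : ℝ) ≤ Real.exp (1/2 : ℝ) := by
  nlinarith [exp_half_sq, Real.exp_pos (1/2 : ℝ), exp_one_lb]

lemma exp_half_ub : Real.exp (1/2 : ℝ) ≤ (1.6487213 : ℝ) := by
  nlinarith [exp_half_sq, Real.exp_pos (1/2 : ℝ), exp_one_ub]

lemma sqrt_exp_one_eq : Real.sqrt (Real.exp 1) = Real.exp (1/2 : ℝ) := by
  exact (Real.exp_half 1).symm

/-! ### gaussian integral facts -/

lemma gauss_integrable : Integrable (fun t : ℝ => Real.exp (-t ^ 2 / 2)) := by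
  have := integrable_exp_neg_mul_sq (by norm_num : (0:ℝ) < 1/2)
  convert this using 2 with t
  ring_nf

lemma gauss_cont : Continuous (fun t : ℝ => Real.exp (-t ^ 2 / 2)) := by continuity

lemma gauss_int_nonneg (z : ℝ) : 0 ≤ ∫ t in Set.Iic z, Real.exp (-t ^ 2 / 2) := by
  apply integral_nonneg; intro t; positivity

lemma gauss_int_le (z : ℝ) : (∫ t in Set.Iic z, Real.exp (-t ^ 2 / 2)) ≤ 2.50664 := by
  have h1 : (∫ t in Set.Iic z, Real.exp (-t ^ 2 / 2)) ≤ ∫ t : ℝ, Real.exp (-t ^ 2 / 2) := by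
    apply setIntegral_le_integral gauss_integrable
    filter_upwards with t using by positivity
  have h2 : (∫ t : ℝ, Real.exp (-t ^ 2 / 2)) = Real.sqrt (Real.pi / (1/2)) := by
    rw [← integral_gaussian (1/2 : ℝ)]
    congr 1; funext t; ring_nf
  have h3 : Real.sqrt (Real.pi / (1/2)) ≤ 2.50664 := by
    rw [show (2.50664:ℝ) = Real.sqrt (2.50664^2) from (Real.sqrt_sq (by norm_num)).symm]
    apply Real.sqrt_le_sqrt
    nlinarith [Real.pi_lt_d6]
  linarith

lemma φfun_nonneg (z : ℝ) : 0 ≤ φfun z := by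
  apply mul_nonneg (Real.sqrt_nonneg _) (gauss_int_nonneg z)

lemma φfun_le (z : ℝ) : φfun z ≤ 4.133 := by
  unfold φfun
  rw [sqrt_exp_one_eq]
  calc Real.exp (1/2 : ℝ) * ∫ t in Set.Iic z, Real.exp (-t ^ 2 / 2)
      ≤ 1.6487213 * 2.50664 := by
        apply mul_le_mul exp_half_ub (gauss_int_le z) (gauss_int_nonneg z) (by norm_num)
    _ ≤ 4.133 := by norm_num

lemma hasDerivAt_φfun (z : ℝ) : HasDerivAt φfun (φd z) z := by
  have key : ∀ w : ℝ, φfun w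
      = Real.sqrt (Real.exp 1) * (∫ t in Set.Iic (0:ℝ), Real.exp (-t^2/2))
        + Real.sqrt (Real.exp 1) * ∫ t in (0:ℝ)..w, Real.exp (-t^2/2) := by
    intro w
    have := intervalIntegral.integral_Iic_sub_Iic
      (gauss_integrable.integrableOn (s := Set.Iic 0))
      (gauss_integrable.integrableOn (s := Set.Iic w))
    unfold φfun
    rw [← this]; ring
  have h2 : HasDerivAt (fun w : ℝ =>
      Real.sqrt (Real.exp 1) * (∫ t in Set.Iic (0:ℝ), Real.exp (-t^2/2))
        + Real.sqrt (Real.exp 1) * ∫ t in (0:ℝ)..w, Real.exp (-t^2/2))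
      (φd z) z := by
    apply HasDerivAt.const_add
    have h3 : HasDerivAt (fun w : ℝ => ∫ t in (0:ℝ)..w, Real.exp (-t^2/2))
        (Real.exp (-z^2/2)) z :=
      intervalIntegral.integral_hasDerivAt_right gauss_integrable.intervalIntegrable
        gauss_cont.stronglyMeasurable.stronglyMeasurableAtFilter gauss_cont.continuousAt
    have h4 := h3.const_mul (Real.sqrt (Real.exp 1))
    refine h4.congr_deriv ?_
    rw [sqrt_exp_one_eq, φd, ← Real.exp_add]
    congr 1; ring
  exact h2.congr_of_eventuallyEq (Filter.Eventually.of_forall key)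

/-! ### φd facts -/

lemma φd_pos (z : ℝ) : 0 < φd z := Real.exp_pos _

lemma φd_le (z : ℝ) : φd z ≤ 1.6487213 := by
  have : φd z ≤ Real.exp (1/2 : ℝ) := by
    apply Real.exp_le_exp.2; nlinarith [sq_nonneg z]
  linarith [exp_half_ub]

lemma φd_ge_one {z : ℝ} (hz : z ^ 2 ≤ 1) : 1 ≤ φd z := by
  rw [show (1:ℝ) = Real.exp 0 from (Real.exp_zero).symm]
  apply Real.exp_le_exp.2; linarith

lemma φd_neg_eq (z : ℝ) : φd (-z) = φd z := by unfold φd; ring_nf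

lemma hasDerivAt_φd (z : ℝ) : HasDerivAt φd (φdd z) z := by
  have h1 : HasDerivAt (fun w : ℝ => (1 - w ^ 2) / 2) (-z) z := by
    have := ((hasDerivAt_pow 2 z).const_sub 1).div_const 2
    exact this.congr_deriv (by ring)
  have := (h1.exp)
  refine this.congr_deriv ?_
  show φd z * -z = φdd z
  simp only [φdd, φd]; ring

lemma φdd_abs_le (z : ℝ) : |φdd z| ≤ 1 := by
  have h1 : |z| ≤ Real.exp ((z^2 - 1)/2) := by
    have := Real.add_one_le_exp ((z^2-1)/2)
    nlinarith [sq_nonneg (|z| - 1), sq_abs z]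
  have h2 : Real.exp ((1 - z^2)/2) * Real.exp ((z^2-1)/2) = 1 := by
    rw [← Real.exp_add, show (1 - z^2)/2 + (z^2-1)/2 = 0 by ring, Real.exp_zero]
  have h3 : |φdd z| = |z| * Real.exp ((1 - z^2)/2) := by
    unfold φdd
    rw [abs_mul, abs_neg, abs_of_pos (Real.exp_pos _)]
  rw [h3]
  nlinarith [Real.exp_pos ((1 - z^2)/2), abs_nonneg z]

/-! ### ψ pointwise facts -/

lemma ψfun_nonneg (z : ℝ) : 0 ≤ ψfun z := by
  unfold ψfun; split
  · norm_num
  · positivity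

lemma ψfun_le (z : ℝ) : ψfun z ≤ Real.exp 1 := by
  unfold ψfun; split
  · positivity
  · apply Real.exp_le_exp.2
    rename_i h
    have hu : (0:ℝ) < (2*z - 1)^2 := by
      push_neg at h; nlinarith
    have : 0 < 1 / (2*z-1)^2 := by positivity
    linarith

lemma ψfun_one : ψfun 1 = 1 := by
  unfold ψfun; norm_num

lemma ψfun_zero_of_le {z : ℝ} (h : z ≤ 1/2) : ψfun z = 0 := by
  unfold ψfun; rw [if_pos h]

lemma ψfun_ge_one {z : ℝ} (hz : 1 ≤ z) : 1 ≤ ψfun z := by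
  unfold ψfun
  rw [if_neg (by linarith)]
  rw [show (1:ℝ) = Real.exp 0 from (Real.exp_zero).symm]
  apply Real.exp_le_exp.2
  rw [Real.exp_zero]
  have h1 : (1:ℝ) ≤ (2*z-1)^2 := by nlinarith
  have h2 : 1 / (2*z-1)^2 ≤ 1 := by
    rw [div_le_one (by linarith)]; linarith
  linarith

/-! ### numeric exp bounds at shifted points -/

lemma exp2_lb : (7.3890559 : ℝ) ≤ Real.exp 2 := by
  have h : Real.exp 2 = Real.exp 1 * Real.exp 1 := by rw [← Real.exp_add]; norm_num
  nlinarith [exp_one_lb, Real.exp_pos 1]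

lemma exp3_lb : (20.0855 : ℝ) ≤ Real.exp 3 := by
  have h : Real.exp 3 = Real.exp 2 * Real.exp 1 := by rw [← Real.exp_add]; norm_num
  nlinarith [exp_one_lb, exp2_lb, Real.exp_pos 1, Real.exp_pos 2]

lemma exp35_lb : (33.115 : ℝ) ≤ Real.exp 3.5 := by
  have h : Real.exp 3.5 = Real.exp 3 * Real.exp (1/2 : ℝ) := by rw [← Real.exp_add]; norm_num
  nlinarith [exp3_lb, exp_half_lb, Real.exp_pos 3, Real.exp_pos (1/2 : ℝ)]

lemma exp45_lb : (90.01 : ℝ) ≤ Real.exp 4.5 := by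
  have h : Real.exp 4.5 = Real.exp 2 * Real.exp 2 * Real.exp (1/2 : ℝ) := by
    rw [← Real.exp_add, ← Real.exp_add]; norm_num
  nlinarith [exp2_lb, exp_half_lb, Real.exp_pos 2, Real.exp_pos (1/2 : ℝ)]

lemma exp6_lb : (403.42 : ℝ) ≤ Real.exp 6 := by
  have h : Real.exp 6 = Real.exp 3 * Real.exp 3 := by rw [← Real.exp_add]; norm_num
  nlinarith [exp3_lb, Real.exp_pos 3]

lemma exp_ge_shift {a w Ea : ℝ} (hw : a ≤ w) (hEa : Ea ≤ Real.exp a) (h0 : 0 ≤ Ea) :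
    Ea * (1 + (w-a) + (w-a)^2/2 + (w-a)^3/6 + (w-a)^4/24 + (w-a)^5/120) ≤ Real.exp w := by
  have hx : 0 ≤ w - a := by linarith
  have hT := exp_ge_T5 hx
  have hE : Real.exp w = Real.exp a * Real.exp (w - a) := by rw [← Real.exp_add]; ring_nf
  have hTnn : (0:ℝ) ≤ 1 + (w-a) + (w-a)^2/2 + (w-a)^3/6 + (w-a)^4/24 + (w-a)^5/120 := by positivity
  calc Ea * (1 + (w-a) + (w-a)^2/2 + (w-a)^3/6 + (w-a)^4/24 + (w-a)^5/120)
      ≤ Real.exp a * Real.exp (w-a) := by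
        apply mul_le_mul hEa hT hTnn (Real.exp_pos a).le
    _ = Real.exp w := hE.symm

/-! ### core polynomial bounds -/

lemma core_ψd {s : ℝ} (hs : 0 ≤ s) : 4 * Real.exp 1 * s^3 ≤ 4.47 * Real.exp (s^2) := by
  have h1 : 4 * Real.exp 1 * s^3 ≤ 10.8731276 * s^3 := by
    apply mul_le_mul_of_nonneg_right _ (by positivity)
    linarith [exp_one_ub]
  have h2 : 10.8731276 * s^3 ≤ 4.47 * (1 + s^2 + (s^2)^2/2 + (s^2)^3/6 + (s^2)^4/24 + (s^2)^5/120 + (s^2)^6/720) := by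
    nlinarith [sq_nonneg (s^2 - 3/2), sq_nonneg (s - 1.2247), sq_nonneg (s*(s-1.2247)),
      sq_nonneg (s^2*(s-1.2247)), sq_nonneg (s^3*(s-1.2247)), sq_nonneg (s^4*(s-1.2247)),
      sq_nonneg (s^5*(s-1.2247)), sq_nonneg s, mul_nonneg hs hs, pow_nonneg hs 3, pow_nonneg hs 5]
  have h3 := exp_ge_T6 (sq_nonneg s)
  nlinarith

private lemma int02 {w : ℝ} (h0 : 0 ≤ w) (h2 : w ≤ 2) : 16*w^3 - 24*w^2 ≤ 11.956 * (1+w) := by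
  nlinarith [sq_nonneg (w-2), mul_nonneg h0 h0, mul_nonneg (sub_nonneg.2 h2) (sq_nonneg w)]

private lemma int23 {x : ℝ} (h0 : 0 ≤ x) (h1 : x ≤ 1) :
    16*(x+2)^3 - 24*(x+2)^2 ≤ 11.956 * (7.3890559 * (1+x+x^2/2+x^3/6+x^4/24+x^5/120)) := by
  nlinarith [sq_nonneg x, mul_nonneg h0 h0, pow_nonneg h0 3, pow_nonneg h0 4, pow_nonneg h0 5,
    mul_nonneg (sub_nonneg.2 h1) (sq_nonneg x)]

private lemma int335 {x : ℝ} (h0 : 0 ≤ x) (h1 : x ≤ 1/2) :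
    16*(x+3)^3 - 24*(x+3)^2 ≤ 11.956 * (20.0855 * (1+x+x^2/2+x^3/6+x^4/24+x^5/120)) := by
  nlinarith [sq_nonneg x, pow_nonneg h0 3, pow_nonneg h0 4, pow_nonneg h0 5,
    mul_nonneg (sub_nonneg.2 h1) (sq_nonneg x)]

private lemma int3545 {x : ℝ} (h0 : 0 ≤ x) (h1 : x ≤ 1) :
    16*(x+3.5)^3 - 24*(x+3.5)^2 ≤ 11.956 * (33.115 * (1+x+x^2/2+x^3/6+x^4/24+x^5/120)) := by
  nlinarith [sq_nonneg (x - 0.186), sq_nonneg x, pow_nonneg h0 3, pow_nonneg h0 4, pow_nonneg h0 5,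
    mul_nonneg (sub_nonneg.2 h1) (sq_nonneg x), mul_nonneg (mul_nonneg h0 h0) (sq_nonneg (x-0.186)),
    mul_nonneg h0 (sq_nonneg (x-0.186))]

private lemma int456 {x : ℝ} (h0 : 0 ≤ x) (h1 : x ≤ 3/2) :
    16*(x+4.5)^3 - 24*(x+4.5)^2 ≤ 11.956 * (90.01 * (1+x+x^2/2+x^3/6+x^4/24+x^5/120)) := by
  nlinarith [sq_nonneg x, pow_nonneg h0 3, pow_nonneg h0 4, pow_nonneg h0 5,
    mul_nonneg (sub_nonneg.2 h1) (sq_nonneg x)]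

private lemma int610 {x : ℝ} (h0 : 0 ≤ x) (h1 : x ≤ 4) :
    16*(x+6)^3 - 24*(x+6)^2 ≤ 11.956 * (403.42 * (1+x+x^2/2+x^3/6+x^4/24+x^5/120)) := by
  nlinarith [sq_nonneg x, pow_nonneg h0 3, pow_nonneg h0 4, pow_nonneg h0 5,
    mul_nonneg (sub_nonneg.2 h1) (sq_nonneg x)]

private lemma int10 {w : ℝ} (h : 10 ≤ w) : 16*w^3 - 24*w^2 ≤ 11.956 * (w^7/5040) := by
  nlinarith [pow_le_pow_left₀ (by norm_num : (0:ℝ) ≤ 10) h 4, sq_nonneg w,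
    pow_nonneg (le_trans (by norm_num) h : (0:ℝ) ≤ w) 3,
    pow_nonneg (le_trans (by norm_num) h : (0:ℝ) ≤ w) 7]

lemma core_ψdd_pos {w : ℝ} (h0 : 0 ≤ w) : 16*w^3 - 24*w^2 ≤ 11.956 * Real.exp w := by
  rcases le_or_gt w 2 with h | h
  · have := Real.add_one_le_exp w
    have := int02 h0 h
    nlinarith
  rcases le_or_gt w 3 with h3 | h3
  · have hs := exp_ge_shift (a := 2) (Ea := 7.3890559) h.le exp2_lb (by norm_num)
    have hi := int23 (x := w - 2) (by linarith) (by linarith)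
    have hw : w - 2 + 2 = w := by ring
    rw [hw] at hi
    nlinarith
  rcases le_or_gt w 3.5 with h35 | h35
  · have hs := exp_ge_shift (a := 3) (Ea := 20.0855) h3.le exp3_lb (by norm_num)
    have hi := int335 (x := w - 3) (by linarith) (by linarith)
    have hw : w - 3 + 3 = w := by ring
    rw [hw] at hi
    nlinarith
  rcases le_or_gt w 4.5 with h45 | h45
  · have hs := exp_ge_shift (a := 3.5) (Ea := 33.115) h35.le exp35_lb (by norm_num)
    have hi := int3545 (x := w - 3.5) (by linarith) (by linarith)
    have hw : w - 3.5 + 3.5 = w := by ring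
    rw [hw] at hi
    nlinarith
  rcases le_or_gt w 6 with h6 | h6
  · have hs := exp_ge_shift (a := 4.5) (Ea := 90.01) h45.le exp45_lb (by norm_num)
    have hi := int456 (x := w - 4.5) (by linarith) (by linarith)
    have hw : w - 4.5 + 4.5 = w := by ring
    rw [hw] at hi
    nlinarith
  rcases le_or_gt w 10 with h10 | h10
  · have hs := exp_ge_shift (a := 6) (Ea := 403.42) h6.le exp6_lb (by norm_num)
    have hi := int610 (x := w - 6) (by linarith) (by linarith)
    have hw : w - 6 + 6 = w := by ring
    rw [hw] at hi
    nlinarith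
  · have hs := exp_ge_pow7 h0
    have := int10 h10.le
    nlinarith

lemma core_ψdd_neg {w : ℝ} (h0 : 0 ≤ w) : 24*w^2 - 16*w^3 ≤ 11.956 * Real.exp w := by
  have hq := Real.quadratic_le_exp_of_nonneg h0
  nlinarith [sq_nonneg (w-1), mul_nonneg h0 (sq_nonneg (w-1)), sq_nonneg w]
/-! ### ψd and ψdd bounds -/

lemma ψd_nonneg (z : ℝ) : 0 ≤ ψd z := by
  unfold ψd; split
  · norm_num
  · rename_i h
    push_neg at h
    have : (0:ℝ) < 2*z - 1 := by linarith
    positivity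

lemma ψd_eq_sform {z : ℝ} (h : 1/2 < z) :
    ψd z = Real.exp 1 * Real.exp (-((2*z-1)⁻¹)^2) * (4 * ((2*z-1)⁻¹)^3) := by
  have hu : (0:ℝ) < 2*z - 1 := by linarith
  unfold ψd
  rw [if_neg (by linarith)]
  have hsplit : 1 - 1/(2*z-1)^2 = 1 + (-((2*z-1)⁻¹)^2) := by field_simp; ring
  rw [hsplit, Real.exp_add]
  have : 4 / (2*z-1)^3 = 4 * ((2*z-1)⁻¹)^3 := by field_simp
  rw [this]

lemma ψd_le (z : ℝ) : ψd z ≤ 4.47 := by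
  rcases le_or_gt z (1/2) with h | h
  · unfold ψd; rw [if_pos h]; norm_num
  · rw [ψd_eq_sform h]
    have hu : (0:ℝ) < 2*z - 1 := by linarith
    set s := (2*z-1)⁻¹ with hs
    have hs0 : 0 < s := by positivity
    have hc := core_ψd hs0.le
    have he : Real.exp (-s^2) = (Real.exp (s^2))⁻¹ := Real.exp_neg _
    rw [he]
    rw [show Real.exp 1 * (Real.exp (s^2))⁻¹ * (4*s^3) = (4 * Real.exp 1 * s^3) / Real.exp (s^2) by ring]
    rw [div_le_iff₀ (Real.exp_pos _)]
    nlinarith [Real.exp_pos (s^2)]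

lemma ψdd_eq_wform {z : ℝ} (h : 1/2 < z) :
    ψdd z = Real.exp 1 * Real.exp (-(((2*z-1)⁻¹)^2)) * (16*(((2*z-1)⁻¹)^2)^3 - 24*(((2*z-1)⁻¹)^2)^2) := by
  have hu : (0:ℝ) < 2*z - 1 := by linarith
  unfold ψdd
  rw [if_neg (by linarith)]
  have hsplit : 1 - 1/(2*z-1)^2 = 1 + (-(((2*z-1)⁻¹)^2)) := by field_simp; ring
  rw [hsplit, Real.exp_add]
  have : 16 / (2*z-1)^6 - 24/(2*z-1)^4 = 16*(((2*z-1)⁻¹)^2)^3 - 24*(((2*z-1)⁻¹)^2)^2 := by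
    field_simp
  rw [this]

lemma ψdd_abs_le (z : ℝ) : |ψdd z| ≤ 32.5 := by
  rcases le_or_gt z (1/2) with h | h
  · unfold ψdd; rw [if_pos h]; norm_num
  · rw [ψdd_eq_wform h]
    have hu : (0:ℝ) < 2*z - 1 := by linarith
    set w := ((2*z-1)⁻¹)^2 with hw
    have hw0 : 0 ≤ w := sq_nonneg _
    have h1 := core_ψdd_pos hw0
    have h2 := core_ψdd_neg hw0
    have he : Real.exp (-w) = (Real.exp w)⁻¹ := Real.exp_neg _
    have hepos := Real.exp_pos w
    rw [abs_le]
    constructor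
    · rw [he]
      rw [show Real.exp 1 * (Real.exp w)⁻¹ * (16*w^3 - 24*w^2)
          = (Real.exp 1 * (16*w^3-24*w^2)) / Real.exp w by ring]
      rw [le_div_iff₀ hepos]
      nlinarith [exp_one_ub, Real.exp_pos 1]
    · rw [he]
      rw [show Real.exp 1 * (Real.exp w)⁻¹ * (16*w^3 - 24*w^2)
          = (Real.exp 1 * (16*w^3-24*w^2)) / Real.exp w by ring]
      rw [div_le_iff₀ hepos]
      nlinarith [exp_one_ub, Real.exp_pos 1]

/-! ### squeeze lemma for derivative at the gluing point -/

lemma hasDerivAt_of_sq_bound {f : ℝ → ℝ} {a C : ℝ} (hC : 0 ≤ C)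
    (h : ∀ z, |f z| ≤ C * (z - a)^2) : HasDerivAt f 0 a := by
  have hfa : f a = 0 := by
    have := h a
    simp at this
    exact abs_eq_zero.1 (le_antisymm (by simpa using this) (abs_nonneg _))
  rw [hasDerivAt_iff_isLittleO]
  simp only [hfa, sub_zero, smul_zero, sub_zero]
  rw [Asymptotics.isLittleO_iff]
  intro c hc
  rw [Metric.eventually_nhds_iff]
  refine ⟨c / (C + 1), by positivity, fun z hz => ?_⟩
  rw [Real.dist_eq] at hz
  have h1 := h z
  have h2 : |f z| ≤ C * |z - a| * |z - a| := by
    rw [show C * |z-a| * |z-a| = C * |z-a|^2 by ring, ← sq_abs (z-a)] at *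
    simpa using h1
  have h3 : C * |z - a| ≤ c := by
    have : C * |z-a| ≤ C * (c / (C+1)) := by
      apply mul_le_mul_of_nonneg_left hz.le hC
    have h4 : C * (c / (C+1)) ≤ c := by
      rw [div_eq_inv_mul]
      have : C / (C+1) ≤ 1 := by
        rw [div_le_one (by linarith)]; linarith
      calc C * ((C+1)⁻¹ * c) = (C/(C+1)) * c := by ring
        _ ≤ 1 * c := by apply mul_le_mul_of_nonneg_right this hc.le
        _ = c := one_mul c
    linarith
  calc ‖f z‖ = |f z| := rfl
    _ ≤ C * |z-a| * |z-a| := h2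
    _ ≤ c * |z-a| := by
        apply mul_le_mul_of_nonneg_right h3 (abs_nonneg _)
    _ = c * ‖z - a‖ := rfl

/-! ### pointwise quadratic bounds near 1/2 -/

lemma ψfun_sq_bound (z : ℝ) : |ψfun z| ≤ 11 * (z - 1/2)^2 := by
  rcases le_or_gt z (1/2) with h | h
  · rw [ψfun_zero_of_le h]; simp; positivity
  · have hu : (0:ℝ) < 2*z - 1 := by linarith
    have hval : ψfun z = Real.exp 1 * Real.exp (-(1/(2*z-1)^2)) := by
      unfold ψfun
      rw [if_neg (by linarith), show 1 - 1/(2*z-1)^2 = 1 + (-(1/(2*z-1)^2)) by ring, Real.exp_add]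
    rw [hval, abs_of_nonneg (by positivity)]
    have hx : (0:ℝ) < 1/(2*z-1)^2 := by positivity
    have h1 : 1/(2*z-1)^2 ≤ Real.exp (1/(2*z-1)^2) := by
      linarith [Real.add_one_le_exp (1/(2*z-1)^2)]
    have h2 : Real.exp (-(1/(2*z-1)^2)) ≤ (2*z-1)^2 := by
      rw [Real.exp_neg]
      rw [inv_le_comm₀ (Real.exp_pos _) (by positivity)]
      calc ((2*z-1)^2)⁻¹ = 1/(2*z-1)^2 := by ring
        _ ≤ Real.exp (1/(2*z-1)^2) := h1
    have h3 : (2*z-1)^2 = 4 * (z - 1/2)^2 := by ring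
    nlinarith [exp_one_ub, Real.exp_pos (-(1/(2*z-1)^2)), sq_nonneg (z - 1/2)]

lemma ψd_sq_bound (z : ℝ) : |ψd z| ≤ 1305 * (z - 1/2)^2 := by
  rcases le_or_gt z (1/2) with h | h
  · unfold ψd; rw [if_pos h]; simp; positivity
  · rw [abs_of_nonneg (ψd_nonneg z)]
    have hu : (0:ℝ) < 2*z - 1 := by linarith
    rcases le_or_gt z 1 with h1 | h1
    · -- s ≥ 1 region : ψd = 4e s³ e^{-s²} ≤ 480 e / s² ≤ 480e u² /// u = 1/s
      rw [ψd_eq_sform h]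
      set s := (2*z-1)⁻¹ with hs
      have hs1 : 1 ≤ s := by
        rw [hs, le_inv_comm₀ one_pos hu]
        simp; linarith
      have hs0 : (0:ℝ) < s := by linarith
      -- e^{s²} ≥ s⁶/6 ≥ s⁵/6  (s ≥ 1)
      have hc : (s^2)^3/6 ≤ Real.exp (s^2) := exp_ge_cube (sq_nonneg s)
      have hinv : Real.exp (-s^2) = (Real.exp (s^2))⁻¹ := Real.exp_neg _
      -- goal: e * e^{-s²} * 4 s³ ≤ 1305 (z-1/2)² = 1305 u²/4 ;  u = 1/s
      have hu2 : (z - 1/2)^2 = (1/(2*s))^2 := by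
        rw [hs]; field_simp
      rw [hu2, hinv]
      have hepos := Real.exp_pos (s^2)
      rw [show Real.exp 1 * (Real.exp (s^2))⁻¹ * (4*s^3) = (Real.exp 1 * 4 * s^3)/Real.exp (s^2) by ring]
      rw [div_le_iff₀ hepos]
      have hgoal : Real.exp 1 * 4 * s^3 ≤ 1305 * (1/(2*s))^2 * ((s^2)^3/6) := by
        have heq : (1305:ℝ) * (1/(2*s))^2 * ((s^2)^3/6) = (1305/24) * s^4 := by
          field_simp; ring
        rw [heq]
        have hss : s^3 ≤ s^4 := by
          calc s^3 = s^3 * 1 := by ring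
            _ ≤ s^3 * s := by apply mul_le_mul_of_nonneg_left hs1 (by positivity)
            _ = s^4 := by ring
        nlinarith [exp_one_ub, pow_nonneg hs0.le 3]
      calc Real.exp 1 * 4 * s^3 ≤ 1305 * (1/(2*s))^2 * ((s^2)^3/6) := hgoal
        _ ≤ 1305 * (1/(2*s))^2 * Real.exp (s^2) := by
            apply mul_le_mul_of_nonneg_left hc (by positivity)
    · have h2 := ψd_le z
      nlinarith [sq_nonneg (z - 1/2), ψd_nonneg z]
/-! ### derivatives of ψfun and ψd -/

lemma hasDerivAt_2z1 (z : ℝ) : HasDerivAt (fun w : ℝ => 2*w - 1) 2 z := by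
  simpa using ((hasDerivAt_id z).const_mul 2).sub_const 1

lemma hasDerivAt_ψfun (z : ℝ) : HasDerivAt ψfun (ψd z) z := by
  rcases lt_trichotomy z (1/2) with h | h | h
  · have hloc : ψfun =ᶠ[nhds z] (fun _ => (0:ℝ)) := by
      filter_upwards [eventually_lt_nhds h] with w hw
      exact ψfun_zero_of_le hw.le
    have : HasDerivAt (fun _ : ℝ => (0:ℝ)) 0 z := hasDerivAt_const z 0
    have h2 := this.congr_of_eventuallyEq hloc
    have : ψd z = 0 := by unfold ψd; rw [if_pos h.le]
    rwa [this]
  · subst h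
    have key := hasDerivAt_of_sq_bound (a := (1/2:ℝ)) (C := 11) (by norm_num) ψfun_sq_bound
    have : ψd (1/2 : ℝ) = 0 := by unfold ψd; rw [if_pos le_rfl]
    rwa [this]
  · -- z > 1/2 : chain rule
    have hu : (0:ℝ) < 2*z - 1 := by linarith
    have h1 := hasDerivAt_2z1 z
    have h2 : HasDerivAt (fun w : ℝ => (2*w-1)^2) (2 * (2*z-1)^1 * 2) z := by
      simpa using h1.fun_pow 2
    have hne : ((2*z-1)^2 : ℝ) ≠ 0 := by positivity
    have h3 := h2.inv hne
    have h4 : HasDerivAt (fun w : ℝ => 1 - ((2*w-1)^2)⁻¹)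
        (2 * (2*z-1)^1 * 2 / ((2*z-1)^2)^2) z := by
      have := h3.const_sub 1
      refine this.congr_deriv ?_
      field_simp
    have h5 := h4.exp
    have hloc : (fun w : ℝ => Real.exp (1 - ((2*w-1)^2)⁻¹)) =ᶠ[nhds z] ψfun := by
      filter_upwards [eventually_gt_nhds h] with w hw
      unfold ψfun
      rw [if_neg (by linarith), one_div]
    have h6 := h5.congr_of_eventuallyEq hloc.symm
    refine h6.congr_deriv ?_
    unfold ψd
    rw [if_neg (by linarith), one_div]
    field_simp
    ring
  
lemma hasDerivAt_ψd (z : ℝ) : HasDerivAt ψd (ψdd z) z := by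
  rcases lt_trichotomy z (1/2) with h | h | h
  · have hloc : ψd =ᶠ[nhds z] (fun _ => (0:ℝ)) := by
      filter_upwards [eventually_lt_nhds h] with w hw
      unfold ψd; rw [if_pos hw.le]
    have h2 := (hasDerivAt_const z (0:ℝ)).congr_of_eventuallyEq hloc
    have : ψdd z = 0 := by unfold ψdd; rw [if_pos h.le]
    rwa [this]
  · subst h
    have key := hasDerivAt_of_sq_bound (a := (1/2:ℝ)) (C := 1305) (by norm_num) ψd_sq_bound
    have : ψdd (1/2 : ℝ) = 0 := by unfold ψdd; rw [if_pos le_rfl]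
    rwa [this]
  · have hu : (0:ℝ) < 2*z - 1 := by linarith
    have h1 := hasDerivAt_2z1 z
    have h2 : HasDerivAt (fun w : ℝ => (2*w-1)^2) (2 * (2*z-1)^1 * 2) z := by
      simpa using h1.fun_pow 2
    have hne2 : ((2*z-1)^2 : ℝ) ≠ 0 := by positivity
    have h4 : HasDerivAt (fun w : ℝ => 1 - ((2*w-1)^2)⁻¹)
        (2 * (2*z-1)^1 * 2 / ((2*z-1)^2)^2) z := by
      have := (h2.inv hne2).const_sub 1
      refine this.congr_deriv ?_
      field_simp
    have h5 := h4.exp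
    -- second factor: 4 * ((2w-1)^3)⁻¹
    have h6 : HasDerivAt (fun w : ℝ => (2*w-1)^3) (3 * (2*z-1)^2 * 2) z := by
      simpa using h1.fun_pow 3
    have hne3 : ((2*z-1)^3 : ℝ) ≠ 0 := by positivity
    have h7 : HasDerivAt (fun w : ℝ => 4 * ((2*w-1)^3)⁻¹)
        (4 * (-(3 * (2*z-1)^2 * 2) / ((2*z-1)^3)^2)) z := (h6.inv hne3).const_mul 4
    have h8 := h5.mul h7
    have hloc : (fun w : ℝ => Real.exp (1 - ((2*w-1)^2)⁻¹) * (4 * ((2*w-1)^3)⁻¹)) =ᶠ[nhds z] ψd := by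
      filter_upwards [eventually_gt_nhds h] with w hw
      unfold ψd
      rw [if_neg (by linarith), one_div]
      rw [div_eq_mul_inv]
    have h9 := h8.congr_of_eventuallyEq hloc.symm
    refine h9.congr_deriv ?_
    unfold ψdd
    rw [if_neg (by linarith), one_div]
    field_simp
    ring
/-! ### Lipschitz helpers -/

lemma lip_of_deriv {f f' : ℝ → ℝ} (h : ∀ z, HasDerivAt f (f' z) z) {C : ℝ}
    (hC : ∀ z, |f' z| ≤ C) (a b : ℝ) : |f a - f b| ≤ C * |a - b| := by
  have := Convex.norm_image_sub_le_of_norm_hasDerivWithin_le (s := (Set.univ : Set ℝ))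
    (f := f) (f' := f') (fun z _ => (h z).hasDerivWithinAt)
    (fun z _ => by rw [Real.norm_eq_abs]; exact hC z) convex_univ (Set.mem_univ b) (Set.mem_univ a)
  simpa [Real.norm_eq_abs] using this

lemma disj_bound {F : ℝ → ℝ} (hF0 : ∀ z, z ≤ 1/2 → F z = 0) {M C : ℝ}
    (hM : ∀ z, |F z| ≤ M) {c₁ c₂ : ℝ} (h1 : |c₁| ≤ C) (h2 : |c₂| ≤ C) (a : ℝ) :
    |F (-a) * c₁ - F a * c₂| ≤ M * C := by
  have hM0 : 0 ≤ M := le_trans (abs_nonneg _) (hM 0)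
  have hC0 : 0 ≤ C := le_trans (abs_nonneg _) h1
  rcases le_or_gt a (1/2) with h | h
  · rw [hF0 a h]
    simp only [zero_mul, sub_zero]
    rw [abs_mul]
    exact mul_le_mul (hM _) h1 (abs_nonneg _) hM0
  · rw [hF0 (-a) (by linarith)]
    simp only [zero_mul, zero_sub, abs_neg]
    rw [abs_mul]
    exact mul_le_mul (hM _) h2 (abs_nonneg _) hM0

lemma ψd_abs_le (z : ℝ) : |ψd z| ≤ 4.47 := by
  rw [abs_of_nonneg (ψd_nonneg z)]; exact ψd_le z

lemma ψfun_abs_le (z : ℝ) : |ψfun z| ≤ 2.7182819 := by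
  rw [abs_of_nonneg (ψfun_nonneg z)]; linarith [ψfun_le z, exp_one_ub]

lemma φfun_abs_le (z : ℝ) : |φfun z| ≤ 4.133 := by
  rw [abs_of_nonneg (φfun_nonneg z)]; exact φfun_le z

lemma φd_abs_le (z : ℝ) : |φd z| ≤ 1.6487213 := by
  rw [abs_of_nonneg (φd_pos z).le]; exact φd_le z

lemma ψd_zero_of_le {z : ℝ} (h : z ≤ 1/2) : ψd z = 0 := by unfold ψd; rw [if_pos h]
lemma ψdd_zero_of_le {z : ℝ} (h : z ≤ 1/2) : ψdd z = 0 := by unfold ψdd; rw [if_pos h]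

/-! ### the pair functions and their estimates -/

def Pf (a b : ℝ) : ℝ := -(ψd (-a) * φfun (-b)) - ψd a * φfun b

def Qf (a b : ℝ) : ℝ := -(ψfun (-a) * φd (-b)) - ψfun a * φd b

lemma φd_diff (a b : ℝ) : |φd a - φd b| ≤ 1 * |a - b| :=
  lip_of_deriv hasDerivAt_φd φdd_abs_le a b

lemma Pf_abs (a b : ℝ) : |Pf a b| ≤ 18.475 := by
  have h := disj_bound (fun z hz => ψd_zero_of_le hz) ψd_abs_le
    (c₁ := φfun (-b)) (c₂ := -(φfun b)) (C := 4.133)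
    (φfun_abs_le _) (by rw [abs_neg]; exact φfun_abs_le _) a
  have : Pf a b = -(ψd (-a) * φfun (-b) - ψd a * (-(φfun b))) := by unfold Pf; ring
  rw [this, abs_neg]
  linarith

lemma Qf_abs (a b : ℝ) : |Qf a b| ≤ 4.482 := by
  have h := disj_bound (fun z hz => ψfun_zero_of_le hz) ψfun_abs_le
    (c₁ := φd (-b)) (c₂ := -(φd b)) (C := 1.6487213)
    (φd_abs_le _) (by rw [abs_neg]; exact φd_abs_le _) a
  have : Qf a b = -(ψfun (-a) * φd (-b) - ψfun a * (-(φd b))) := by unfold Qf; ring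
  rw [this, abs_neg]
  linarith

lemma Pf_nonpos (a b : ℝ) : Pf a b ≤ 0 := by
  unfold Pf
  have h1 := mul_nonneg (ψd_nonneg (-a)) (φfun_nonneg (-b))
  have h2 := mul_nonneg (ψd_nonneg a) (φfun_nonneg b)
  linarith

lemma Qf_nonpos (a b : ℝ) : Qf a b ≤ 0 := by
  unfold Qf
  have h1 := mul_nonneg (ψfun_nonneg (-a)) (φd_pos (-b)).le
  have h2 := mul_nonneg (ψfun_nonneg a) (φd_pos b).le
  linarith

lemma Qf_le_neg_one {a b : ℝ} (ha : 1 ≤ |a|) (hb : b^2 ≤ 1) : Qf a b ≤ -1 := by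
  unfold Qf
  rcases abs_cases a with ⟨h, _⟩ | ⟨h, _⟩
  · have h1 : 1 ≤ ψfun a := ψfun_ge_one (by linarith)
    have h2 : 1 ≤ φd b := φd_ge_one hb
    have h3 := mul_nonneg (ψfun_nonneg (-a)) (φd_pos (-b)).le
    nlinarith
  · have h1 : 1 ≤ ψfun (-a) := ψfun_ge_one (by linarith)
    have h2 : 1 ≤ φd (-b) := φd_ge_one (by nlinarith [hb] : (-b)^2 ≤ 1)
    have h3 := mul_nonneg (ψfun_nonneg a) (φd_pos b).le
    nlinarith

/-! ### difference estimates for the pair functions -/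

lemma Pf_diff_a (b a a' : ℝ) : |Pf a b - Pf a' b| ≤ 134.3225 * |a - a'| := by
  have hd : ∀ z : ℝ, HasDerivAt (fun a => Pf a b)
      (ψdd (-z) * φfun (-b) - ψdd z * φfun b) z := by
    intro z
    have h1 : HasDerivAt (fun a : ℝ => ψd (-a)) (ψdd (-z) * (-1)) z :=
      (hasDerivAt_ψd (-z)).comp z (hasDerivAt_neg z)
    have h2 := (h1.mul_const (φfun (-b))).neg
    have h3 := (hasDerivAt_ψd z).mul_const (φfun b)
    have h4 := h2.sub h3
    exact h4.congr_deriv (by ring)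
  have hb : ∀ z : ℝ, |ψdd (-z) * φfun (-b) - ψdd z * φfun b| ≤ 32.5 * 4.133 :=
    fun z => disj_bound (fun w hw => ψdd_zero_of_le hw) ψdd_abs_le
      (φfun_abs_le _) (φfun_abs_le _) z
  have := lip_of_deriv hd (C := 134.3225) (fun z => by linarith [hb z]) a a'
  exact this

lemma Pf_diff_b (a b b' : ℝ) : |Pf a b - Pf a b'| ≤ 7.37 * |b - b'| := by
  have hd : ∀ z : ℝ, HasDerivAt (fun b => Pf a b)
      (ψd (-a) * φd (-z) - ψd a * φd z) z := by
    intro z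
    have h1 : HasDerivAt (fun b : ℝ => φfun (-b)) (φd (-z) * (-1)) z :=
      (hasDerivAt_φfun (-z)).comp z (hasDerivAt_neg z)
    have h2 := (h1.const_mul (ψd (-a))).neg
    have h3 := (hasDerivAt_φfun z).const_mul (ψd a)
    have h4 := h2.sub h3
    exact h4.congr_deriv (by ring)
  have hb : ∀ z : ℝ, |ψd (-a) * φd (-z) - ψd a * φd z| ≤ 4.47 * 1.6487213 :=
    fun z => disj_bound (fun w hw => ψd_zero_of_le hw) ψd_abs_le
      (φd_abs_le _) (φd_abs_le _) a
  have := lip_of_deriv hd (C := 7.37) (fun z => by linarith [hb z]) b b'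
  exact this

lemma Qf_diff_a (b a a' : ℝ) : |Qf a b - Qf a' b| ≤ 7.37 * |a - a'| := by
  have hd : ∀ z : ℝ, HasDerivAt (fun a => Qf a b)
      (ψd (-z) * φd (-b) - ψd z * φd b) z := by
    intro z
    have h1 : HasDerivAt (fun a : ℝ => ψfun (-a)) (ψd (-z) * (-1)) z :=
      (hasDerivAt_ψfun (-z)).comp z (hasDerivAt_neg z)
    have h2 := (h1.mul_const (φd (-b))).neg
    have h3 := (hasDerivAt_ψfun z).mul_const (φd b)
    have h4 := h2.sub h3
    exact h4.congr_deriv (by ring)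
  have hb : ∀ z : ℝ, |ψd (-z) * φd (-b) - ψd z * φd b| ≤ 4.47 * 1.6487213 :=
    fun z => disj_bound (fun w hw => ψd_zero_of_le hw) ψd_abs_le
      (φd_abs_le _) (φd_abs_le _) z
  have := lip_of_deriv hd (C := 7.37) (fun z => by linarith [hb z]) a a'
  exact this

lemma Qf_diff_b (a b b' : ℝ) : |Qf a b - Qf a b'| ≤ 2.7182819 * |b - b'| := by
  have hd : ∀ z : ℝ, HasDerivAt (fun b => Qf a b)
      (ψfun (-a) * φdd (-z) - ψfun a * φdd z) z := by
    intro z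
    have h1 : HasDerivAt (fun b : ℝ => φd (-b)) (φdd (-z) * (-1)) z :=
      (hasDerivAt_φd (-z)).comp z (hasDerivAt_neg z)
    have h2 := (h1.const_mul (ψfun (-a))).neg
    have h3 := (hasDerivAt_φd z).const_mul (ψfun a)
    have h4 := h2.sub h3
    exact h4.congr_deriv (by ring)
  have hb : ∀ z : ℝ, |ψfun (-a) * φdd (-z) - ψfun a * φdd z| ≤ 2.7182819 * 1 :=
    fun z => disj_bound (fun w hw => ψfun_zero_of_le hw) ψfun_abs_le
      (φdd_abs_le _) (φdd_abs_le _) a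
  have := lip_of_deriv hd (C := 2.7182819) (fun z => by linarith [hb z]) b b'
  exact this

lemma Pf_diff (a b a' b' : ℝ) :
    |Pf a b - Pf a' b'| ≤ 134.3225 * |a - a'| + 7.37 * |b - b'| := by
  have h1 := Pf_diff_a b a a'
  have h2 := Pf_diff_b a' b b'
  calc |Pf a b - Pf a' b'| = |(Pf a b - Pf a' b) + (Pf a' b - Pf a' b')| := by ring_nf
    _ ≤ |Pf a b - Pf a' b| + |Pf a' b - Pf a' b'| := abs_add_le _ _
    _ ≤ 134.3225 * |a - a'| + 7.37 * |b - b'| := by linarith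

lemma Qf_diff (a b a' b' : ℝ) :
    |Qf a b - Qf a' b'| ≤ 7.37 * |a - a'| + 2.7182819 * |b - b'| := by
  have h1 := Qf_diff_a b a a'
  have h2 := Qf_diff_b a' b b'
  calc |Qf a b - Qf a' b'| = |(Qf a b - Qf a' b) + (Qf a' b - Qf a' b')| := by ring_nf
    _ ≤ |Qf a b - Qf a' b| + |Qf a' b - Qf a' b'| := abs_add_le _ _
    _ ≤ 7.37 * |a - a'| + 2.7182819 * |b - b'| := by linarith
/-! ### the gradient of hardFun -/

def gradH {d : ℕ} (x : EuclideanSpace ℝ (Fin (d + 1))) : EuclideanSpace ℝ (Fin (d + 1)) :=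
  WithLp.toLp 2 (fun k => (if k = 0 then -(φd (x 0)) else 0)
    + ∑ j : Fin d, ((if j.castSucc = k then Pf (x j.castSucc) (x j.succ) else 0)
        + (if j.succ = k then Qf (x j.castSucc) (x j.succ) else 0)))

section GradProof

variable {d : ℕ}

local notation "E" => EuclideanSpace ℝ (Fin (d + 1))

lemma hasGradientAt_hardFun (x : E) : HasGradientAt hardFun (gradH x) x := by
  classical
  set pr : Fin (d+1) → (E →L[ℝ] ℝ) := fun i => EuclideanSpace.proj (𝕜 := ℝ) i with hpr
  -- Fréchet derivative candidate
  set D : E →L[ℝ] ℝ :=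
    (-(ψfun 1)) • (φd (x 0) • pr 0) +
      ∑ j : Fin d,
        ((ψfun (-(x j.castSucc)) • (φd (-(x j.succ)) • (-(pr j.succ)))
          + φfun (-(x j.succ)) • (ψd (-(x j.castSucc)) • (-(pr j.castSucc))))
         - (ψfun (x j.castSucc) • (φd (x j.succ) • pr j.succ)
          + φfun (x j.succ) • (ψd (x j.castSucc) • pr j.castSucc))) with hD
  have hF : HasFDerivAt hardFun D x := by
    have hA : HasFDerivAt (fun y : E => -(ψfun 1) * φfun (y 0))
        ((-(ψfun 1)) • (φd (x 0) • pr 0)) x := by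
      exact ((hasDerivAt_φfun (x 0)).comp_hasFDerivAt x (pr 0).hasFDerivAt).const_mul _
    have hsum : HasFDerivAt (fun y : E => ∑ j : Fin d,
        (ψfun (-(y j.castSucc)) * φfun (-(y j.succ)) - ψfun (y j.castSucc) * φfun (y j.succ)))
        (∑ j : Fin d,
          ((ψfun (-(x j.castSucc)) • (φd (-(x j.succ)) • (-(pr j.succ)))
            + φfun (-(x j.succ)) • (ψd (-(x j.castSucc)) • (-(pr j.castSucc))))
           - (ψfun (x j.castSucc) • (φd (x j.succ) • pr j.succ)
            + φfun (x j.succ) • (ψd (x j.castSucc) • pr j.castSucc)))) x := by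
      apply HasFDerivAt.fun_sum
      intro j _
      have hneg1 : HasFDerivAt (fun y : E => -(y j.castSucc)) (-(pr j.castSucc)) x :=
        (pr j.castSucc).hasFDerivAt.neg
      have hneg2 : HasFDerivAt (fun y : E => -(y j.succ)) (-(pr j.succ)) x :=
        (pr j.succ).hasFDerivAt.neg
      have h1 : HasFDerivAt (fun y : E => ψfun (-(y j.castSucc)))
          (ψd (-(x j.castSucc)) • (-(pr j.castSucc))) x := by
        have := (hasDerivAt_ψfun (-(x j.castSucc))).comp_hasFDerivAt x hneg1; exact this
      have h2 : HasFDerivAt (fun y : E => φfun (-(y j.succ)))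
          (φd (-(x j.succ)) • (-(pr j.succ))) x := by
        have := (hasDerivAt_φfun (-(x j.succ))).comp_hasFDerivAt x hneg2; exact this
      have h3 : HasFDerivAt (fun y : E => ψfun (y j.castSucc))
          (ψd (x j.castSucc) • pr j.castSucc) x := by
        have := (hasDerivAt_ψfun (x j.castSucc)).comp_hasFDerivAt x (pr j.castSucc).hasFDerivAt; exact this
      have h4 : HasFDerivAt (fun y : E => φfun (y j.succ))
          (φd (x j.succ) • pr j.succ) x := by
        have := (hasDerivAt_φfun (x j.succ)).comp_hasFDerivAt x (pr j.succ).hasFDerivAt; exact this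
      exact (h1.mul h2).sub (h3.mul h4)
    exact hA.add hsum
  rw [hasGradientAt_iff_hasFDerivAt]
  have heq : (InnerProductSpace.toDual ℝ E) (gradH x) = D := by
    apply ContinuousLinearMap.ext
    intro v
    have hlhs : (InnerProductSpace.toDual ℝ E) (gradH x) v = ∑ k, gradH x k * v k := by
      simp [InnerProductSpace.toDual_apply_apply, PiLp.inner_apply, mul_comm]
    rw [hlhs]
    have hrhs : D v = -(ψfun 1) * (φd (x 0) * v 0) +
        ∑ j : Fin d,
          ((ψfun (-(x j.castSucc)) * (φd (-(x j.succ)) * (-(v j.succ)))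
            + φfun (-(x j.succ)) * (ψd (-(x j.castSucc)) * (-(v j.castSucc))))
           - (ψfun (x j.castSucc) * (φd (x j.succ) * v j.succ)
            + φfun (x j.succ) * (ψd (x j.castSucc) * v j.castSucc))) := by
      rw [hD]
      simp [ContinuousLinearMap.sum_apply, hpr]
    rw [hrhs]
    -- expand the left sum
    have hexp : ∀ k, gradH x k * v k =
        (if k = 0 then -(φd (x 0)) * v k else 0)
        + ∑ j : Fin d, ((if j.castSucc = k then Pf (x j.castSucc) (x j.succ) * v k else 0)
            + (if j.succ = k then Qf (x j.castSucc) (x j.succ) * v k else 0)) := by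
      intro k
      unfold gradH
      rw [add_mul, Finset.sum_mul]
      congr 1
      · split <;> simp
      · apply Finset.sum_congr rfl
        intro j _
        rw [add_mul]
        congr 1 <;> (split <;> simp)
    rw [Finset.sum_congr rfl (fun k _ => hexp k)]
    rw [Finset.sum_add_distrib]
    rw [Finset.sum_ite_eq' Finset.univ (0 : Fin (d+1)) (fun k => -(φd (x 0)) * v k)]
    rw [Finset.sum_comm]
    simp only [Finset.mem_univ, if_true]
    have hswap : ∀ j : Fin d,
        (∑ k : Fin (d+1), ((if j.castSucc = k then Pf (x j.castSucc) (x j.succ) * v k else 0)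
            + (if j.succ = k then Qf (x j.castSucc) (x j.succ) * v k else 0)))
        = Pf (x j.castSucc) (x j.succ) * v j.castSucc
          + Qf (x j.castSucc) (x j.succ) * v j.succ := by
      intro j
      rw [Finset.sum_add_distrib]
      rw [Finset.sum_ite_eq Finset.univ j.castSucc (fun k => Pf (x j.castSucc) (x j.succ) * v k)]
      rw [Finset.sum_ite_eq Finset.univ j.succ (fun k => Qf (x j.castSucc) (x j.succ) * v k)]
      simp
    rw [Finset.sum_congr rfl (fun j _ => hswap j)]
    rw [ψfun_one]
    congr 1
    · ring
    · apply Finset.sum_congr rfl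
      intro j _
      unfold Pf Qf
      ring
  rw [heq]
  exact hF

end GradProof
/-! ### sum collapse helpers -/

lemma sum_ite_inj_eq {n m : ℕ} {g : Fin n → Fin m} (hg : Function.Injective g)
    (f : Fin n → ℝ) {j0 : Fin n} {k : Fin m} (h : g j0 = k) :
    (∑ j : Fin n, if g j = k then f j else 0) = f j0 := by
  rw [Finset.sum_eq_single j0]
  · rw [if_pos h]
  · intro j _ hne
    rw [if_neg]
    intro hgj
    exact hne (hg (hgj.trans h.symm))
  · intro hj; exact absurd (Finset.mem_univ j0) hj

lemma sum_ite_zero {n m : ℕ} {g : Fin n → Fin m} (f : Fin n → ℝ) {k : Fin m}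
    (h : ∀ j, g j ≠ k) : (∑ j : Fin n, if g j = k then f j else 0) = 0 := by
  apply Finset.sum_eq_zero
  intro j _
  rw [if_neg (h j)]

lemma abs_sum_ite_le {n m : ℕ} {g : Fin n → Fin m} (hg : Function.Injective g)
    (f : Fin n → ℝ) (k : Fin m) {B : ℝ} (hB : 0 ≤ B) (hf : ∀ j, |f j| ≤ B) :
    |∑ j : Fin n, if g j = k then f j else 0| ≤ B := by
  by_cases h : ∃ j0 : Fin n, g j0 = k
  · obtain ⟨j0, hj0⟩ := h
    rw [sum_ite_inj_eq hg f hj0]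
    exact hf j0
  · push_neg at h
    rw [sum_ite_zero f h]
    simpa using hB

lemma gradH_split {d : ℕ} (x : EuclideanSpace ℝ (Fin (d+1))) (k : Fin (d+1)) :
    gradH x k = (if k = 0 then -(φd (x 0)) else 0)
      + (∑ j : Fin d, if j.castSucc = k then Pf (x j.castSucc) (x j.succ) else 0)
      + (∑ j : Fin d, if j.succ = k then Qf (x j.castSucc) (x j.succ) else 0) := by
  show (if k = 0 then -(φd (x 0)) else 0)
    + (∑ j : Fin d, ((if j.castSucc = k then Pf (x j.castSucc) (x j.succ) else 0)
        + (if j.succ = k then Qf (x j.castSucc) (x j.succ) else 0))) = _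
  rw [Finset.sum_add_distrib]
  ring

/-! ### Part (3): sup-norm bound on the gradient -/

lemma gradH_abs_le {d : ℕ} (x : EuclideanSpace ℝ (Fin (d+1))) (k : Fin (d+1)) :
    |gradH x k| ≤ 23 := by
  rw [gradH_split]
  have hP : |∑ j : Fin d, if j.castSucc = k then Pf (x j.castSucc) (x j.succ) else 0| ≤ 18.475 :=
    abs_sum_ite_le (Fin.castSucc_injective d) _ k (by norm_num) (fun j => Pf_abs _ _)
  by_cases hk : k = 0
  · have hQ : (∑ j : Fin d, if j.succ = k then Qf (x j.castSucc) (x j.succ) else 0) = 0 :=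
      sum_ite_zero _ (fun j => by rw [hk]; exact Fin.succ_ne_zero j)
    rw [hQ, if_pos hk, add_zero]
    have h0 : |-(φd (x 0))| ≤ 1.6487213 := by rw [abs_neg]; exact φd_abs_le _
    calc |(-(φd (x 0))) + (∑ j : Fin d, if j.castSucc = k then Pf (x j.castSucc) (x j.succ) else 0)|
        ≤ |(-(φd (x 0)))| + |∑ j : Fin d, if j.castSucc = k then Pf (x j.castSucc) (x j.succ) else 0| :=
          abs_add_le _ _
      _ ≤ 23 := by linarith
  · have hQ : |∑ j : Fin d, if j.succ = k then Qf (x j.castSucc) (x j.succ) else 0| ≤ 4.482 :=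
      abs_sum_ite_le (Fin.succ_injective d) _ k (by norm_num) (fun j => Qf_abs _ _)
    rw [if_neg hk, zero_add]
    calc |(∑ j : Fin d, if j.castSucc = k then Pf (x j.castSucc) (x j.succ) else 0)
          + (∑ j : Fin d, if j.succ = k then Qf (x j.castSucc) (x j.succ) else 0)|
        ≤ |∑ j : Fin d, if j.castSucc = k then Pf (x j.castSucc) (x j.succ) else 0|
          + |∑ j : Fin d, if j.succ = k then Qf (x j.castSucc) (x j.succ) else 0| := abs_add_le _ _
      _ ≤ 23 := by linarith

/-! ### Part (1): bounded suboptimality at 0 -/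

lemma hardFun_part1 {d : ℕ} (x : EuclideanSpace ℝ (Fin (d+1))) :
    hardFun (0 : EuclideanSpace ℝ (Fin (d+1))) - hardFun x ≤ 12 * ((d:ℝ) + 1) := by
  have h0k : ∀ k : Fin (d+1), (0 : EuclideanSpace ℝ (Fin (d+1))) k = 0 := fun k => rfl
  have hval : hardFun (0 : EuclideanSpace ℝ (Fin (d+1))) = -(φfun 0) := by
    unfold hardFun
    rw [ψfun_one]
    rw [Finset.sum_eq_zero (fun j _ => by rw [h0k, h0k, neg_zero, ψfun_zero_of_le (by norm_num)]; ring)]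
    rw [h0k]; ring
  have hterm : ∀ j : Fin d,
      -(11.235 : ℝ) ≤ ψfun (-(x j.castSucc)) * φfun (-(x j.succ)) - ψfun (x j.castSucc) * φfun (x j.succ) := by
    intro j
    have h1 := mul_nonneg (ψfun_nonneg (-(x j.castSucc))) (φfun_nonneg (-(x j.succ)))
    have h2 : ψfun (x j.castSucc) * φfun (x j.succ) ≤ 2.7182819 * 4.133 := by
      apply mul_le_mul _ (φfun_le _) (φfun_nonneg _) (by norm_num)
      linarith [ψfun_le (x j.castSucc), exp_one_ub]
    nlinarith
  have hsum : -(11.235 : ℝ) * d ≤ ∑ j : Fin d,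
      (ψfun (-(x j.castSucc)) * φfun (-(x j.succ)) - ψfun (x j.castSucc) * φfun (x j.succ)) := by
    calc -(11.235 : ℝ) * d = ∑ _j : Fin d, -(11.235:ℝ) := by
          rw [Finset.sum_const, Finset.card_univ, Fintype.card_fin]
          simp [nsmul_eq_mul]; ring
      _ ≤ _ := Finset.sum_le_sum (fun j _ => hterm j)
  have hx : -(4.133 + 11.235 * d) ≤ hardFun x := by
    unfold hardFun
    rw [ψfun_one]
    have h3 : -(φfun (x 0)) ≥ -4.133 := by linarith [φfun_le (x 0)]
    nlinarith
  have hd : (0:ℝ) ≤ d := Nat.cast_nonneg d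
  have h0 : hardFun (0 : EuclideanSpace ℝ (Fin (d+1))) ≤ 0 := by
    rw [hval]; linarith [φfun_nonneg 0]
  linarith

/-! ### Part (4): large gradient when the last coordinate vanishes -/

lemma sq_le_one_of_abs_lt {t : ℝ} (h : |t| < 1) : t^2 ≤ 1 := by
  nlinarith [abs_nonneg t, sq_abs t]

lemma gradH_part4 {d : ℕ} (x : EuclideanSpace ℝ (Fin (d+1))) (hlast : x (Fin.last d) = 0) :
    ∃ k : Fin (d+1), 1 ≤ |gradH x k| := by
  classical
  set S := Finset.univ.filter (fun i : Fin (d+1) => |x i| < 1) with hS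
  have hne : S.Nonempty := ⟨Fin.last d, by simp [hS, hlast]⟩
  set k := S.min' hne with hk
  have hkS : k ∈ S := S.min'_mem hne
  have hklt : |x k| < 1 := by
    rw [hS] at hkS
    exact (Finset.mem_filter.1 hkS).2
  have hmin : ∀ i ∈ S, k ≤ i := fun i hi => S.min'_le i hi
  refine ⟨k, ?_⟩
  have hgoal : gradH x k ≤ -1 := by
    rw [gradH_split]
    have hP : (∑ j : Fin d, if j.castSucc = k then Pf (x j.castSucc) (x j.succ) else 0) ≤ 0 := by
      apply Finset.sum_nonpos
      intro j _
      split
      · exact Pf_nonpos _ _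
      · exact le_refl 0
    by_cases hk0 : k = 0
    · have hQ : (∑ j : Fin d, if j.succ = k then Qf (x j.castSucc) (x j.succ) else 0) = 0 :=
        sum_ite_zero _ (fun j => by rw [hk0]; exact Fin.succ_ne_zero j)
      rw [hQ, if_pos hk0, add_zero]
      have hx0 : (x 0)^2 ≤ 1 := by
        rw [← hk0]; exact sq_le_one_of_abs_lt hklt
      have := φd_ge_one hx0
      linarith
    · set j0 := k.pred hk0 with hj0
      have hs : j0.succ = k := Fin.succ_pred k hk0
      have hQ : (∑ j : Fin d, if j.succ = k then Qf (x j.castSucc) (x j.succ) else 0)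
          = Qf (x j0.castSucc) (x j0.succ) :=
        sum_ite_inj_eq (Fin.succ_injective d) _ hs
      have hb : (x j0.succ)^2 ≤ 1 := by
        rw [hs]; exact sq_le_one_of_abs_lt hklt
      have ha : 1 ≤ |x j0.castSucc| := by
        by_contra hcon
        push_neg at hcon
        have hmem : j0.castSucc ∈ S := by
          rw [hS]; exact Finset.mem_filter.2 ⟨Finset.mem_univ _, hcon⟩
        have hle := hmin _ hmem
        have hlt : j0.castSucc < k := by
          rw [Fin.lt_def]
          simp only [Fin.coe_castSucc, hj0, Fin.coe_pred]
          have : (k : ℕ) ≠ 0 := fun h => hk0 (Fin.ext h)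
          omega
        exact absurd hle (not_le.2 hlt)
      have hQval := Qf_le_neg_one ha hb
      rw [hQ, if_neg hk0, zero_add]
      linarith
  rw [le_abs]
  right
  linarith
/-! ### Part (2): Lipschitz gradient -/

def Wt {d : ℕ} (x y : EuclideanSpace ℝ (Fin (d+1))) (k : Fin (d+1)) : ℝ :=
  (if k = 0 then (x 0 - y 0)^2 else 0)
  + (∑ j : Fin d, if j.castSucc = k then
      134.3225*(x j.castSucc - y j.castSucc)^2 + 7.37*(x j.succ - y j.succ)^2 else 0)
  + (∑ j : Fin d, if j.succ = k then
      7.37*(x j.castSucc - y j.castSucc)^2 + 2.7182819*(x j.succ - y j.succ)^2 else 0)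

private lemma csq_tp {t p a a' b : ℝ} (ht : |t| ≤ a) (hp : |p| ≤ 134.3225*a' + 7.37*b)
    (ha : 0 ≤ a) (ha' : 0 ≤ a') (hb : 0 ≤ b) :
    (t + p)^2 ≤ 152 * (a^2 + (134.3225*a'^2 + 7.37*b^2)) := by
  have h1 : |t + p| ≤ a + (134.3225*a' + 7.37*b) :=
    (abs_add_le t p).trans (add_le_add ht hp)
  have h2 : (t+p)^2 ≤ (a + (134.3225*a' + 7.37*b))^2 := by
    rw [← sq_abs (t+p)]
    apply pow_le_pow_left₀ (abs_nonneg _) h1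
  nlinarith [sq_nonneg (a - a'), sq_nonneg (a - b), sq_nonneg (a' - b), mul_nonneg ha ha',
    mul_nonneg ha hb, mul_nonneg ha' hb]

private lemma csq_t {t a : ℝ} (ht : |t| ≤ a) : t^2 ≤ 152 * a^2 := by
  have := sq_abs t
  nlinarith [abs_nonneg t]

private lemma csq_pq {p q a b c e : ℝ} (hp : |p| ≤ 134.3225*a + 7.37*b)
    (hq : |q| ≤ 7.37*c + 2.7182819*e)
    (ha : 0 ≤ a) (hb : 0 ≤ b) (hc : 0 ≤ c) (he : 0 ≤ e) :
    (p + q)^2 ≤ 152 * ((134.3225*a^2 + 7.37*b^2) + (7.37*c^2 + 2.7182819*e^2)) := by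
  have h1 : |p + q| ≤ (134.3225*a + 7.37*b) + (7.37*c + 2.7182819*e) :=
    (abs_add_le p q).trans (add_le_add hp hq)
  have h2 : (p+q)^2 ≤ ((134.3225*a + 7.37*b) + (7.37*c + 2.7182819*e))^2 := by
    rw [← sq_abs (p+q)]
    apply pow_le_pow_left₀ (abs_nonneg _) h1
  nlinarith [sq_nonneg (a-b), sq_nonneg (a-c), sq_nonneg (a-e), sq_nonneg (b-c), sq_nonneg (b-e),
    sq_nonneg (c-e), mul_nonneg ha hb, mul_nonneg ha hc, mul_nonneg ha he, mul_nonneg hb hc,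
    mul_nonneg hb he, mul_nonneg hc he]

private lemma csq_q {q c e : ℝ} (hq : |q| ≤ 7.37*c + 2.7182819*e) (hc : 0 ≤ c) (he : 0 ≤ e) :
    q^2 ≤ 152 * (7.37*c^2 + 2.7182819*e^2) := by
  have h2 : q^2 ≤ (7.37*c + 2.7182819*e)^2 := by
    rw [← sq_abs q]
    apply pow_le_pow_left₀ (abs_nonneg _) hq
  nlinarith [sq_nonneg (c - e), mul_nonneg hc he]

lemma step_A {d : ℕ} (x y : EuclideanSpace ℝ (Fin (d+1))) (k : Fin (d+1)) :
    (gradH x k - gradH y k)^2 ≤ 152 * Wt x y k := by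
  classical
  rw [gradH_split x k, gradH_split y k]
  unfold Wt
  -- combine the sums of differences
  have hPd : (∑ j : Fin d, if j.castSucc = k then Pf (x j.castSucc) (x j.succ) else 0)
      - (∑ j : Fin d, if j.castSucc = k then Pf (y j.castSucc) (y j.succ) else 0)
      = ∑ j : Fin d, if j.castSucc = k then
          Pf (x j.castSucc) (x j.succ) - Pf (y j.castSucc) (y j.succ) else 0 := by
    rw [← Finset.sum_sub_distrib]
    apply Finset.sum_congr rfl
    intro j _
    split <;> ring
  have hQd : (∑ j : Fin d, if j.succ = k then Qf (x j.castSucc) (x j.succ) else 0)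
      - (∑ j : Fin d, if j.succ = k then Qf (y j.castSucc) (y j.succ) else 0)
      = ∑ j : Fin d, if j.succ = k then
          Qf (x j.castSucc) (x j.succ) - Qf (y j.castSucc) (y j.succ) else 0 := by
    rw [← Finset.sum_sub_distrib]
    apply Finset.sum_congr rfl
    intro j _
    split <;> ring
  by_cases hk0 : k = 0
  · -- Q-parts vanish
    have hQx : (∑ j : Fin d, if j.succ = k then
        Qf (x j.castSucc) (x j.succ) - Qf (y j.castSucc) (y j.succ) else 0) = 0 :=
      sum_ite_zero _ (fun j => by rw [hk0]; exact Fin.succ_ne_zero j)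
    have hWQ : (∑ j : Fin d, if j.succ = k then
        7.37*(x j.castSucc - y j.castSucc)^2 + 2.7182819*(x j.succ - y j.succ)^2 else 0) = 0 :=
      sum_ite_zero _ (fun j => by rw [hk0]; exact Fin.succ_ne_zero j)
    have hdiff : ((if k = 0 then -(φd (x 0)) else 0)
        + (∑ j : Fin d, if j.castSucc = k then Pf (x j.castSucc) (x j.succ) else 0)
        + (∑ j : Fin d, if j.succ = k then Qf (x j.castSucc) (x j.succ) else 0))
        - ((if k = 0 then -(φd (y 0)) else 0)
        + (∑ j : Fin d, if j.castSucc = k then Pf (y j.castSucc) (y j.succ) else 0)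
        + (∑ j : Fin d, if j.succ = k then Qf (y j.castSucc) (y j.succ) else 0))
        = (φd (y 0) - φd (x 0))
          + (∑ j : Fin d, if j.castSucc = k then
              Pf (x j.castSucc) (x j.succ) - Pf (y j.castSucc) (y j.succ) else 0) := by
      rw [if_pos hk0, if_pos hk0]
      rw [← hPd]
      have := hQd
      rw [hQx] at this
      linarith [this]
    rw [hdiff, if_pos hk0, hWQ]
    have ht : |φd (y 0) - φd (x 0)| ≤ |x 0 - y 0| := by
      have := φd_diff (y 0) (x 0)
      rw [one_mul] at this
      calc |φd (y 0) - φd (x 0)| ≤ |y 0 - x 0| := this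
        _ = |x 0 - y 0| := abs_sub_comm _ _
    by_cases hkP : ∃ j1 : Fin d, j1.castSucc = k
    · obtain ⟨j1, hj1⟩ := hkP
      rw [sum_ite_inj_eq (Fin.castSucc_injective d) _ hj1,
        sum_ite_inj_eq (Fin.castSucc_injective d) _ hj1]
      have hp := Pf_diff (x j1.castSucc) (x j1.succ) (y j1.castSucc) (y j1.succ)
      have := csq_tp (a := |x 0 - y 0|) (a' := |x j1.castSucc - y j1.castSucc|)
        (b := |x j1.succ - y j1.succ|) ht (by simpa using hp)
        (abs_nonneg _) (abs_nonneg _) (abs_nonneg _)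
      simpa [sq_abs] using this
    · push_neg at hkP
      rw [sum_ite_zero _ hkP, sum_ite_zero _ hkP]
      have hcs := csq_t ht
      rw [sq_abs] at hcs
      nlinarith [hcs]
  · -- k ≠ 0 : Q present via j0 = k.pred
    have hdiff : ((if k = 0 then -(φd (x 0)) else 0)
        + (∑ j : Fin d, if j.castSucc = k then Pf (x j.castSucc) (x j.succ) else 0)
        + (∑ j : Fin d, if j.succ = k then Qf (x j.castSucc) (x j.succ) else 0))
        - ((if k = 0 then -(φd (y 0)) else 0)
        + (∑ j : Fin d, if j.castSucc = k then Pf (y j.castSucc) (y j.succ) else 0)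
        + (∑ j : Fin d, if j.succ = k then Qf (y j.castSucc) (y j.succ) else 0))
        = (∑ j : Fin d, if j.castSucc = k then
              Pf (x j.castSucc) (x j.succ) - Pf (y j.castSucc) (y j.succ) else 0)
          + (∑ j : Fin d, if j.succ = k then
              Qf (x j.castSucc) (x j.succ) - Qf (y j.castSucc) (y j.succ) else 0) := by
      simp only [if_neg hk0]
      rw [← hPd, ← hQd]
      ring
    rw [hdiff, if_neg hk0]
    set j0 := k.pred hk0 with hj0
    have hs : j0.succ = k := Fin.succ_pred k hk0
    rw [sum_ite_inj_eq (Fin.succ_injective d) _ hs,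
      sum_ite_inj_eq (Fin.succ_injective d) _ hs]
    have hq := Qf_diff (x j0.castSucc) (x j0.succ) (y j0.castSucc) (y j0.succ)
    by_cases hkP : ∃ j1 : Fin d, j1.castSucc = k
    · obtain ⟨j1, hj1⟩ := hkP
      rw [sum_ite_inj_eq (Fin.castSucc_injective d) _ hj1,
        sum_ite_inj_eq (Fin.castSucc_injective d) _ hj1]
      have hp := Pf_diff (x j1.castSucc) (x j1.succ) (y j1.castSucc) (y j1.succ)
      have := csq_pq (a := |x j1.castSucc - y j1.castSucc|) (b := |x j1.succ - y j1.succ|)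
        (c := |x j0.castSucc - y j0.castSucc|) (e := |x j0.succ - y j0.succ|)
        (by simpa using hp) (by simpa using hq)
        (abs_nonneg _) (abs_nonneg _) (abs_nonneg _) (abs_nonneg _)
      simpa [sq_abs] using this
    · push_neg at hkP
      rw [sum_ite_zero _ hkP, sum_ite_zero _ hkP]
      have := csq_q (c := |x j0.castSucc - y j0.castSucc|) (e := |x j0.succ - y j0.succ|)
        (by simpa using hq) (abs_nonneg _) (abs_nonneg _)
      have hgoal : (0 + (Qf (x j0.castSucc) (x j0.succ) - Qf (y j0.castSucc) (y j0.succ)))^2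
          ≤ 152 * (0 + 0 + (7.37*(x j0.castSucc - y j0.castSucc)^2 + 2.7182819*(x j0.succ - y j0.succ)^2)) := by
        rw [zero_add]
        calc (Qf (x j0.castSucc) (x j0.succ) - Qf (y j0.castSucc) (y j0.succ))^2
            ≤ 152 * (7.37*|x j0.castSucc - y j0.castSucc|^2 + 2.7182819*|x j0.succ - y j0.succ|^2) := this
          _ = 152 * (0 + 0 + (7.37*(x j0.castSucc - y j0.castSucc)^2 + 2.7182819*(x j0.succ - y j0.succ)^2)) := by
              rw [sq_abs, sq_abs]; ring
      exact hgoal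

lemma step_B {d : ℕ} (x y : EuclideanSpace ℝ (Fin (d+1))) :
    ∑ k, Wt x y k ≤ 152 * ∑ k, (x k - y k)^2 := by
  classical
  unfold Wt
  rw [Finset.sum_add_distrib, Finset.sum_add_distrib]
  have h1 : (∑ k : Fin (d+1), if k = 0 then (x 0 - y 0)^2 else 0) = (x 0 - y 0)^2 := by
    rw [Finset.sum_ite_eq' Finset.univ (0 : Fin (d+1)) (fun _ => (x 0 - y 0)^2)]
    simp
  have h2 : (∑ k : Fin (d+1), ∑ j : Fin d, if j.castSucc = k then
      134.3225*(x j.castSucc - y j.castSucc)^2 + 7.37*(x j.succ - y j.succ)^2 else 0)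
      = ∑ j : Fin d, (134.3225*(x j.castSucc - y j.castSucc)^2 + 7.37*(x j.succ - y j.succ)^2) := by
    rw [Finset.sum_comm]
    apply Finset.sum_congr rfl
    intro j _
    rw [Finset.sum_ite_eq Finset.univ j.castSucc
      (fun _ => 134.3225*(x j.castSucc - y j.castSucc)^2 + 7.37*(x j.succ - y j.succ)^2)]
    simp
  have h3 : (∑ k : Fin (d+1), ∑ j : Fin d, if j.succ = k then
      7.37*(x j.castSucc - y j.castSucc)^2 + 2.7182819*(x j.succ - y j.succ)^2 else 0)
      = ∑ j : Fin d, (7.37*(x j.castSucc - y j.castSucc)^2 + 2.7182819*(x j.succ - y j.succ)^2) := by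
    rw [Finset.sum_comm]
    apply Finset.sum_congr rfl
    intro j _
    rw [Finset.sum_ite_eq Finset.univ j.succ
      (fun _ => 7.37*(x j.castSucc - y j.castSucc)^2 + 2.7182819*(x j.succ - y j.succ)^2)]
    simp
  rw [h1, h2, h3]
  have hC : (∑ j : Fin d, (x j.castSucc - y j.castSucc)^2)
      = (∑ k : Fin (d+1), (x k - y k)^2) - (x (Fin.last d) - y (Fin.last d))^2 := by
    rw [Fin.sum_univ_castSucc (f := fun k : Fin (d+1) => (x k - y k)^2)]
    ring
  have hZ : (∑ j : Fin d, (x j.succ - y j.succ)^2)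
      = (∑ k : Fin (d+1), (x k - y k)^2) - (x 0 - y 0)^2 := by
    rw [Fin.sum_univ_succ (f := fun k : Fin (d+1) => (x k - y k)^2)]
    ring
  have e2 : (∑ j : Fin d, (134.3225*(x j.castSucc - y j.castSucc)^2 + 7.37*(x j.succ - y j.succ)^2))
      = 134.3225 * (∑ j : Fin d, (x j.castSucc - y j.castSucc)^2)
        + 7.37 * (∑ j : Fin d, (x j.succ - y j.succ)^2) := by
    rw [Finset.sum_add_distrib, Finset.mul_sum, Finset.mul_sum]
  have e3 : (∑ j : Fin d, (7.37*(x j.castSucc - y j.castSucc)^2 + 2.7182819*(x j.succ - y j.succ)^2))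
      = 7.37 * (∑ j : Fin d, (x j.castSucc - y j.castSucc)^2)
        + 2.7182819 * (∑ j : Fin d, (x j.succ - y j.succ)^2) := by
    rw [Finset.sum_add_distrib, Finset.mul_sum, Finset.mul_sum]
  rw [e2, e3, hC, hZ]
  have hS : 0 ≤ ∑ k : Fin (d+1), (x k - y k)^2 :=
    Finset.sum_nonneg (fun k _ => sq_nonneg _)
  nlinarith [sq_nonneg (x (Fin.last d) - y (Fin.last d)), sq_nonneg (x 0 - y 0)]

lemma gradH_lip {d : ℕ} (x y : EuclideanSpace ℝ (Fin (d+1))) :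
    ‖gradH x - gradH y‖ ≤ 152 * ‖x - y‖ := by
  have hnorm : ∀ v : EuclideanSpace ℝ (Fin (d+1)), ‖v‖ = Real.sqrt (∑ k, (v k)^2) := by
    intro v
    rw [EuclideanSpace.norm_eq]
    congr 1
    apply Finset.sum_congr rfl
    intro k _
    rw [Real.norm_eq_abs, sq_abs]
  rw [hnorm, hnorm]
  have happ : ∀ k, (gradH x - gradH y) k = gradH x k - gradH y k := fun k => rfl
  have happ2 : ∀ k, (x - y) k = x k - y k := fun k => rfl
  have hsum : (∑ k, ((gradH x - gradH y) k)^2) ≤ 152^2 * (∑ k, ((x - y) k)^2) := by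
    calc (∑ k, ((gradH x - gradH y) k)^2) = ∑ k, (gradH x k - gradH y k)^2 := by
          apply Finset.sum_congr rfl; intro k _; rw [happ]
      _ ≤ ∑ k, 152 * Wt x y k := Finset.sum_le_sum (fun k _ => step_A x y k)
      _ = 152 * ∑ k, Wt x y k := by rw [Finset.mul_sum]
      _ ≤ 152 * (152 * ∑ k, (x k - y k)^2) := by
          have := step_B x y
          nlinarith
      _ = 152^2 * (∑ k, ((x - y) k)^2) := by
          rw [show (∑ k, ((x - y) k)^2) = ∑ k, (x k - y k)^2 from
            Finset.sum_congr rfl (fun k _ => by rw [happ2])]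
          ring
  calc Real.sqrt (∑ k, ((gradH x - gradH y) k)^2)
      ≤ Real.sqrt (152^2 * (∑ k, ((x - y) k)^2)) := Real.sqrt_le_sqrt hsum
    _ = 152 * Real.sqrt (∑ k, ((x - y) k)^2) := by
        rw [Real.sqrt_mul (by norm_num) _]
        congr 1
        rw [show (152:ℝ)^2 = 152*152 by ring]
        exact Real.sqrt_mul_self (by norm_num)

/-- properties of the hard function `h` on `ℝ^{d+1}`:
(1) `h(0) - inf h ≤ 12·(d+1)`; (2) `∇h` is `152`-Lipschitz; (3) `‖∇h(x)‖_∞ ≤ 23`;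
(4) `‖∇h(x)‖_∞ ≥ 1` whenever the last coordinate of `x` vanishes. -/
theorem hardFun_properties (d : ℕ) :
    (∀ x : EuclideanSpace ℝ (Fin (d + 1)),
      hardFun (0 : EuclideanSpace ℝ (Fin (d + 1))) - hardFun x ≤ 12 * ((d : ℝ) + 1)) ∧
    (∀ x y : EuclideanSpace ℝ (Fin (d + 1)),
      ‖gradient hardFun x - gradient hardFun y‖ ≤ 152 * ‖x - y‖) ∧
    (∀ x : EuclideanSpace ℝ (Fin (d + 1)), ∀ j : Fin (d + 1),
      |gradient hardFun x j| ≤ 23) ∧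
    (∀ x : EuclideanSpace ℝ (Fin (d + 1)), x (Fin.last d) = 0 →
      ∃ j : Fin (d + 1), 1 ≤ |gradient hardFun x j|) := by
  have hgrad : ∀ x : EuclideanSpace ℝ (Fin (d+1)), gradient hardFun x = gradH x :=
    fun x => (hasGradientAt_hardFun x).gradient
  refine ⟨fun x => hardFun_part1 x, fun x y => ?_, fun x j => ?_, fun x hx => ?_⟩
  · rw [hgrad, hgrad]; exact gradH_lip x y
  · rw [hgrad]; exact gradH_abs_le x j
  · obtain ⟨k, hk⟩ := gradH_part4 x hx
    exact ⟨k, by rw [hgrad]; exact hk⟩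

end
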